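/- Let a < b be coprime positive integers. A face F of Âss(a,b) is a face of Ass(a,b) if and only if no 2-element subset of F is an edge of the obstruction graph OG(a,b). -/

import Mathlib

/-- `S(a,b) = { ⌊ib/a⌋ : i = 1, …, a-1 }`. -/
def Sab (a b : ℕ) : Finset ℕ := (Finset.Icc 1 (a - 1)).image (fun i => i * b / a)

/-- A diagonal of the polygon `P_{b+1}` with boundary points `0, 1, …, b`:
a pair `i < j` with `j - i ≥ 2` and `(i, j) ≠ (0, b)`. -/
def IsDiagonal (b i j : ℕ) : Prop := i + 2 ≤ j ∧ j ≤ b ∧ ¬(i = 0 ∧ j = b)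

/-- A diagonal `ij` is `a,b`-admissible if it separates `j - i - 1` and `b - j + i`
boundary points, both of which lie in `S(a,b)`. -/
def Admissible (a b : ℕ) (d : ℕ × ℕ) : Prop :=
  IsDiagonal b d.1 d.2 ∧ d.2 - d.1 - 1 ∈ Sab a b ∧ b - d.2 + d.1 ∈ Sab a b

/-- Two diagonals `ij` and `km` cross if `i < k < j < m` or `k < i < m < j`. -/
def Crosses (d d' : ℕ × ℕ) : Prop :=
  (d.1 < d'.1 ∧ d'.1 < d.2 ∧ d.2 < d'.2) ∨ (d'.1 < d.1 ∧ d.1 < d'.2 ∧ d'.2 < d.2)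

/-- An `a,b`-Dyck path: a north/east lattice path from `(0,0)` to `(b,a)` staying weakly
above `y = (a/b) x`.  It is encoded by the height `h u` of its unique east step over the
column interval `[u, u+1]`, for `0 ≤ u < b`; we normalize `h u = a` for `u ≥ b`. -/
structure DyckPath (a b : ℕ) where
  h : ℕ → ℕ
  mono : Monotone h
  norm : ∀ x, b ≤ x → h x = a
  above : ∀ x, x < b → a * (x + 1) ≤ b * h x

/-- The lattice point `(x, y)` lies on `D` at the bottom of a north step of `D`. -/
def BottomNorth (a b : ℕ) (D : DyckPath a b) (x y : ℕ) : Prop :=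
  x ≤ b ∧ (if x = 0 then 0 else D.h (x - 1)) ≤ y ∧ y < D.h x

/-- The laser of slope `a/b` fired northeast from the lattice point `(x, y)` of `D` first
hits `D` in the interior of the east step whose right endpoint has `x`-coordinate `k`;
the associated laser diagonal is `d(P) = (x, k)`.  The laser passes strictly below the
right endpoint of every earlier east step and strictly above the one it hits. -/
def IsLaserDiag (a b : ℕ) (D : DyckPath a b) (x y k : ℕ) : Prop :=
  x < k ∧ k ≤ b ∧ b * D.h (k - 1) < b * y + a * (k - x) ∧
    ∀ u, x ≤ u → u + 1 < k → b * y + a * (u + 1 - x) < b * D.h u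

/-- `F(D)`: the set of laser diagonals `d(P)` of the lattice points `P ≠ (0,0)` at the
bottoms of north steps of `D`. -/
def FD (a b : ℕ) (D : DyckPath a b) : Set (ℕ × ℕ) :=
  { d | ∃ y, BottomNorth a b D d.1 y ∧ (d.1, y) ≠ (0, 0) ∧ IsLaserDiag a b D d.1 y d.2 }

/-- A finite abstract simplicial complex on the ground set `E`: a downward closed
collection of finite subsets of `E`. -/
structure AbsCplx (E : Type*) where
  faces : Set (Finset E)
  down : ∀ F ∈ faces, ∀ F' ⊆ F, F' ∈ faces

/-- The rational associahedron `Âss(a,b)`: faces are the sets of pairwise noncrossing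
`a,b`-admissible diagonals. -/
def hatAss (a b : ℕ) : AbsCplx (ℕ × ℕ) where
  faces := { F | (∀ d ∈ F, Admissible a b d) ∧ ∀ d ∈ F, ∀ d' ∈ F, ¬Crosses d d' }
  down := fun F hF F' hsub =>
    ⟨fun d hd => hF.1 d (hsub hd), fun d hd d' hd' => hF.2 d (hsub hd) d' (hsub hd')⟩

/-- The rational associahedron `Ass(a,b)`: faces are the subsets of the sets `F(D)`,
as `D` ranges over `a,b`-Dyck paths. -/
def Ass (a b : ℕ) : AbsCplx (ℕ × ℕ) where
  faces := { F | ∃ D : DyckPath a b, ∀ d ∈ F, d ∈ FD a b D }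
  down := fun F hF F' hsub =>
    let ⟨D, hD⟩ := hF
    ⟨D, fun d hd => hD d (hsub hd)⟩

/-- Two distinct `a,b`-admissible diagonals `d, d'` form an edge of the obstruction graph
`OG(a,b)` exactly when `{d, d'}` is a face of `Âss(a,b)` but not of `Ass(a,b)`. -/
def OGEdge (a b : ℕ) (d d' : ℕ × ℕ) : Prop :=
  d ≠ d' ∧ ({d, d'} : Finset (ℕ × ℕ)) ∈ (hatAss a b).faces ∧
    ({d, d'} : Finset (ℕ × ℕ)) ∉ (Ass a b).faces


section AuxObstruction

open Classical in
/-- A chosen Dyck parameter `p` of an admissible diagonal. -/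
noncomputable def par (a b : ℕ) (d : ℕ × ℕ) : ℕ :=
  if h : ∃ p, (1 ≤ p ∧ p + 1 ≤ a) ∧ p * b / a = d.2 - d.1 - 1 then h.choose else 1

lemma par_spec {a b : ℕ} {d : ℕ × ℕ} (hd : Admissible a b d) :
    (1 ≤ par a b d ∧ par a b d + 1 ≤ a) ∧ par a b d * b / a = d.2 - d.1 - 1 := by
  obtain ⟨p, hp, hpe⟩ := Finset.mem_image.mp hd.2.1
  rw [Finset.mem_Icc] at hp
  have hex : ∃ p, (1 ≤ p ∧ p + 1 ≤ a) ∧ p * b / a = d.2 - d.1 - 1 :=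
    ⟨p, ⟨hp.1, by omega⟩, hpe⟩
  rw [par]
  rw [dif_pos hex]
  exact hex.choose_spec

lemma par_key {a b : ℕ} (hcop : Nat.Coprime a b) {d : ℕ × ℕ}
    (hd : Admissible a b d) :
    ∃ r, 1 ≤ r ∧ r + 1 ≤ a ∧ a * (d.2 - d.1 - 1) + r = par a b d * b := by
  obtain ⟨⟨h1, h2⟩, h3⟩ := par_spec hd
  have ha : 0 < a := by omega
  refine ⟨par a b d * b % a, ?_, ?_, ?_⟩
  · rcases Nat.eq_zero_or_pos (par a b d * b % a) with h0 | h0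
    · exfalso
      have hdvd : a ∣ par a b d * b := Nat.dvd_of_mod_eq_zero h0
      have := Nat.le_of_dvd (by omega) (hcop.dvd_of_dvd_mul_right hdvd)
      omega
    · omega
  · have := Nat.mod_lt (par a b d * b) ha
    omega
  · have := Nat.div_add_mod (par a b d * b) a
    rw [h3] at this
    exact this

/-- A chain of diagonals, pairwise disjoint, all lying weakly to the right of `L`. -/
def GoodChain (L : ℕ) (S : Finset (ℕ × ℕ)) : Prop :=
  (∀ e ∈ S, L ≤ e.1) ∧ ∀ e ∈ S, ∀ f ∈ S, e ≠ f → e.2 ≤ f.1 ∨ f.2 ≤ e.1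

instance (L : ℕ) (S : Finset (ℕ × ℕ)) : Decidable (GoodChain L S) := by
  unfold GoodChain; infer_instance

/-- Total parameter weight of the heaviest disjoint chain of `F` right of `L`. -/
noncomputable def Wt (a b : ℕ) (F : Finset (ℕ × ℕ)) (L : ℕ) : ℕ :=
  (F.powerset.filter (GoodChain L)).sup fun S => S.sum (par a b)

lemma Wt_spec (a b : ℕ) (F : Finset (ℕ × ℕ)) (L : ℕ) :
    ∃ S, S ⊆ F ∧ GoodChain L S ∧ Wt a b F L = S.sum (par a b) := by
  have hne : (F.powerset.filter (GoodChain L)).Nonempty :=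
    ⟨∅, Finset.mem_filter.mpr ⟨Finset.mem_powerset.mpr (Finset.empty_subset F),
      ⟨fun e he => absurd he (Finset.notMem_empty e),
       fun e he => absurd he (Finset.notMem_empty e)⟩⟩⟩
  obtain ⟨S, hS, hW⟩ := Finset.exists_mem_eq_sup _ hne fun S => S.sum (par a b)
  rw [Finset.mem_filter, Finset.mem_powerset] at hS
  exact ⟨S, hS.1, hS.2, hW⟩

lemma le_Wt {a b : ℕ} {F S : Finset (ℕ × ℕ)} {L : ℕ} (hS : S ⊆ F) (hG : GoodChain L S) :
    S.sum (par a b) ≤ Wt a b F L :=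
  Finset.le_sup (f := fun S => S.sum (par a b))
    (Finset.mem_filter.mpr ⟨Finset.mem_powerset.mpr hS, hG⟩)

lemma Wt_anti {a b : ℕ} {F : Finset (ℕ × ℕ)} {L L' : ℕ} (h : L ≤ L') :
    Wt a b F L' ≤ Wt a b F L := by
  apply Finset.sup_le
  intro S hS
  rw [Finset.mem_filter, Finset.mem_powerset] at hS
  exact le_Wt hS.1 ⟨fun e he => le_trans h (hS.2.1 e he), hS.2.2⟩

lemma chain_sum {a b : ℕ} {F : Finset (ℕ × ℕ)} (hcop : Nat.Coprime a b)
    (hadm : ∀ e ∈ F, Admissible a b e) (L : ℕ) :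
    ∀ S : Finset (ℕ × ℕ), S ⊆ F → GoodChain L S →
      ∀ J, (∀ e ∈ S, e.2 ≤ J) → L ≤ J →
      b * S.sum (par a b) + S.card + a * L ≤ a * J := by
  intro S
  induction S using Finset.strongInduction with
  | _ S ih =>
    intro hsub hG J hJ hLJ
    rcases S.eq_empty_or_nonempty with rfl | hne
    · simpa using Nat.mul_le_mul le_rfl hLJ
    obtain ⟨e₀, he₀, hmax⟩ := S.exists_max_image (fun e => e.2) hne
    have hdiag : ∀ e ∈ S, e.1 + 2 ≤ e.2 ∧ e.2 ≤ b := fun e he =>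
      ⟨(hadm e (hsub he)).1.1, (hadm e (hsub he)).1.2.1⟩
    have hbound' : ∀ e ∈ S.erase e₀, e.2 ≤ e₀.1 := by
      intro e he
      have hne' := Finset.ne_of_mem_erase he
      have heS := Finset.mem_of_mem_erase he
      rcases hG.2 e heS e₀ he₀ hne' with h | h
      · exact h
      · have h1 := (hdiag e heS).1
        have h2 := hmax e heS
        omega
    have IH := ih (S.erase e₀) (Finset.erase_ssubset he₀)
      (fun e he => hsub (Finset.mem_of_mem_erase he))
      ⟨fun e he => hG.1 e (Finset.mem_of_mem_erase he),
       fun e he f hf hef =>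
         hG.2 e (Finset.mem_of_mem_erase he) f (Finset.mem_of_mem_erase hf) hef⟩
      e₀.1 hbound' (hG.1 e₀ he₀)
    obtain ⟨r, hr1, hr2, hkey⟩ := par_key hcop (hadm e₀ (hsub he₀))
    have hd2 := (hdiag e₀ he₀).1
    have hid : a * (e₀.2 - e₀.1 - 1) + a * e₀.1 + a = a * e₀.2 := by
      have h5 : (e₀.2 - e₀.1 - 1) + e₀.1 + 1 = e₀.2 := by omega
      calc a * (e₀.2 - e₀.1 - 1) + a * e₀.1 + a
          = a * ((e₀.2 - e₀.1 - 1) + e₀.1 + 1) := by ring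
        _ = a * e₀.2 := by rw [h5]
    have hsum : (S.erase e₀).sum (par a b) + par a b e₀ = S.sum (par a b) :=
      Finset.sum_erase_add S _ he₀
    have hcard : (S.erase e₀).card + 1 = S.card := Finset.card_erase_add_one he₀
    have haJ : a * e₀.2 ≤ a * J := Nat.mul_le_mul le_rfl (hJ e₀ he₀)
    have hcomm : par a b e₀ * b = b * par a b e₀ := Nat.mul_comm _ _
    have hexp : b * S.sum (par a b)
        = b * (S.erase e₀).sum (par a b) + b * par a b e₀ := by
      rw [← hsum]; ring
    linarith

lemma Wt_insert {a b : ℕ} {F : Finset (ℕ × ℕ)} (hadm : ∀ e ∈ F, Admissible a b e)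
    {d : ℕ × ℕ} (hd : d ∈ F) :
    ∃ S, S ⊆ F ∧ GoodChain d.1 S ∧ d ∈ S ∧
      S.sum (par a b) = par a b d + Wt a b F d.2 := by
  obtain ⟨S, hSF, hG, hW⟩ := Wt_spec a b F d.2
  have hdd := (hadm d hd).1.1
  have hdS : d ∉ S := fun h => by have := hG.1 d h; omega
  refine ⟨insert d S, Finset.insert_subset hd hSF, ⟨?_, ?_⟩, Finset.mem_insert_self d S, ?_⟩
  · intro e he
    rcases Finset.mem_insert.mp he with rfl | he
    · exact le_rfl
    · exact le_trans (by omega) (hG.1 e he)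
  · intro e he f hf hef
    rcases Finset.mem_insert.mp he with he1 | he1
    · rcases Finset.mem_insert.mp hf with hf1 | hf1
      · exact absurd (he1.trans hf1.symm) hef
      · subst he1; exact Or.inl (hG.1 f hf1)
    · rcases Finset.mem_insert.mp hf with hf1 | hf1
      · subst hf1; exact Or.inr (hG.1 e he1)
      · exact hG.2 e he1 f hf1 hef
  · rw [Finset.sum_insert hdS, hW]

lemma Wt_jump {a b : ℕ} {F : Finset (ℕ × ℕ)} (hadm : ∀ e ∈ F, Admissible a b e)
    {d : ℕ × ℕ} (hd : d ∈ F) :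
    par a b d + Wt a b F d.2 ≤ Wt a b F d.1 := by
  obtain ⟨S, hSF, hG, _, hsum⟩ := Wt_insert hadm hd
  rw [← hsum]
  exact le_Wt hSF hG

lemma Wt_strict {a b : ℕ} {F : Finset (ℕ × ℕ)} (hcop : Nat.Coprime a b)
    (hadm : ∀ e ∈ F, Admissible a b e) {d : ℕ × ℕ} (hd : d ∈ F) :
    par a b d + Wt a b F d.2 + 1 ≤ a := by
  obtain ⟨S, hSF, hG, hdS, hsum⟩ := Wt_insert hadm hd
  have hdd := (hadm d hd).1.1
  have hdb := (hadm d hd).1.2.1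
  have hcs := chain_sum hcop hadm d.1 S hSF hG b
    (fun e he => (hadm e (hSF he)).1.2.1) (by omega)
  have hcard : 1 ≤ S.card := Finset.card_pos.mpr ⟨d, hdS⟩
  rw [hsum] at hcs
  by_contra hcon
  push_neg at hcon
  have hmul : b * a ≤ b * (par a b d + Wt a b F d.2) := Nat.mul_le_mul le_rfl (by omega)
  have hba : a * b = b * a := Nat.mul_comm a b
  linarith [Nat.zero_le (a * d.1)]

lemma Wt_glob {a b : ℕ} {F : Finset (ℕ × ℕ)} (hcop : Nat.Coprime a b)
    (hadm : ∀ e ∈ F, Admissible a b e) (L : ℕ) (hL : L ≤ b) :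
    b * Wt a b F L + a * L ≤ a * b := by
  obtain ⟨S, hSF, hG, hW⟩ := Wt_spec a b F L
  have := chain_sum hcop hadm L S hSF hG b (fun e he => (hadm e (hSF he)).1.2.1) hL
  rw [hW]
  linarith

lemma Wt_le_a {a b : ℕ} {F : Finset (ℕ × ℕ)} (hb : 0 < b) (hcop : Nat.Coprime a b)
    (hadm : ∀ e ∈ F, Admissible a b e) (L : ℕ) (hL : L ≤ b) :
    Wt a b F L ≤ a := by
  have h := Wt_glob hcop hadm L hL
  by_contra hcon
  push_neg at hcon
  have hmul : b * (a + 1) ≤ b * Wt a b F L := Nat.mul_le_mul le_rfl (by omega)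
  have hba : a * b = b * a := Nat.mul_comm a b
  have hbb : b * (a + 1) = b * a + b := by ring
  linarith [Nat.zero_le (a * L)]

lemma Wt_key {a b : ℕ} {F : Finset (ℕ × ℕ)} (hcop : Nat.Coprime a b)
    (hadm : ∀ e ∈ F, Admissible a b e)
    (hnc : ∀ d ∈ F, ∀ e ∈ F, ¬Crosses d e)
    (hcompat : ∀ d ∈ F, ∀ e ∈ F, d.2 = e.2 → d.1 < e.1 →
      b * par a b e + a * e.1 + 1 ≤ b * par a b d + a * d.1)
    {d : ℕ × ℕ} (hd : d ∈ F) {u : ℕ} (hu1 : d.1 ≤ u) (hu2 : u + 2 ≤ d.2) :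
    b * Wt a b F (u + 1) + a * (u + 1) + 1
      ≤ b * par a b d + b * Wt a b F d.2 + a * d.1 := by
  obtain ⟨S, hSF, hG, hW⟩ := Wt_spec a b F (u + 1)
  have hout : ∀ e ∈ S.filter (fun e => ¬ e.2 ≤ d.2), d.2 ≤ e.1 := by
    intro e he
    rw [Finset.mem_filter] at he
    by_contra hcon
    push_neg at hcon
    have h1 := hG.1 e he.1
    have h2 := he.2
    exact hnc d hd e (hSF he.1) (Or.inl ⟨by omega, hcon, by omega⟩)
  have hsplit : (S.filter (fun e => e.2 ≤ d.2)).sum (par a b)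
      + (S.filter (fun e => ¬ e.2 ≤ d.2)).sum (par a b) = S.sum (par a b) :=
    Finset.sum_filter_add_sum_filter_not S _ _
  have houtW : (S.filter (fun e => ¬ e.2 ≤ d.2)).sum (par a b) ≤ Wt a b F d.2 :=
    le_Wt (fun e he => hSF (Finset.mem_filter.mp he).1)
      ⟨hout, fun e he f hf hef =>
        hG.2 e (Finset.mem_filter.mp he).1 f (Finset.mem_filter.mp hf).1 hef⟩
  have houtWb : b * (S.filter (fun e => ¬ e.2 ≤ d.2)).sum (par a b)
      ≤ b * Wt a b F d.2 := Nat.mul_le_mul le_rfl houtW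
  have hin : b * (S.filter (fun e => e.2 ≤ d.2)).sum (par a b) + a * (u + 1) + 1
      ≤ b * par a b d + a * d.1 := by
    by_cases hex : ∃ e ∈ S.filter (fun e => e.2 ≤ d.2), e.2 = d.2
    · obtain ⟨e₀, he₀, heq⟩ := hex
      have he₀S : e₀ ∈ S := (Finset.mem_filter.mp he₀).1
      have hb' : ∀ e ∈ (S.filter (fun e => e.2 ≤ d.2)).erase e₀, e.2 ≤ e₀.1 := by
        intro e he
        have hne' := Finset.ne_of_mem_erase he
        have heIn := Finset.mem_of_mem_erase he
        have heS := (Finset.mem_filter.mp heIn).1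
        rcases hG.2 e heS e₀ he₀S hne' with h | h
        · exact h
        · exfalso
          have h1 : e.2 ≤ d.2 := (Finset.mem_filter.mp heIn).2
          have h2 := (hadm e (hSF heS)).1.1
          omega
      have hcs := chain_sum hcop hadm (u + 1)
        ((S.filter (fun e => e.2 ≤ d.2)).erase e₀)
        (fun e he => hSF (Finset.mem_filter.mp (Finset.mem_of_mem_erase he)).1)
        ⟨fun e he => hG.1 e (Finset.mem_filter.mp (Finset.mem_of_mem_erase he)).1,
         fun e he f hf hef =>
           hG.2 e (Finset.mem_filter.mp (Finset.mem_of_mem_erase he)).1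
             f (Finset.mem_filter.mp (Finset.mem_of_mem_erase hf)).1 hef⟩
        e₀.1 hb' (hG.1 e₀ he₀S)
      have hco := hcompat d hd e₀ (hSF he₀S) heq.symm (by have := hG.1 e₀ he₀S; omega)
      have hsum2 : ((S.filter (fun e => e.2 ≤ d.2)).erase e₀).sum (par a b) + par a b e₀
          = (S.filter (fun e => e.2 ≤ d.2)).sum (par a b) :=
        Finset.sum_erase_add _ _ he₀
      have hexp : b * (S.filter (fun e => e.2 ≤ d.2)).sum (par a b)
          = b * ((S.filter (fun e => e.2 ≤ d.2)).erase e₀).sum (par a b)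
            + b * par a b e₀ := by
        rw [← hsum2]; ring
      linarith
    · push_neg at hex
      have hcs := chain_sum hcop hadm (u + 1) (S.filter (fun e => e.2 ≤ d.2))
        (fun e he => hSF (Finset.mem_filter.mp he).1)
        ⟨fun e he => hG.1 e (Finset.mem_filter.mp he).1,
         fun e he f hf hef =>
           hG.2 e (Finset.mem_filter.mp he).1 f (Finset.mem_filter.mp hf).1 hef⟩
        (d.2 - 1)
        (fun e he => by
          have h1 := (Finset.mem_filter.mp he).2
          have h2 := hex e he
          omega)
        (by omega)
      obtain ⟨r, hr1, hr2, hkey⟩ := par_key hcop (hadm d hd)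
      have hd1 := (hadm d hd).1.1
      have hid : a * (d.2 - d.1 - 1) + a * d.1 + a = a * d.2 := by
        have h5 : (d.2 - d.1 - 1) + d.1 + 1 = d.2 := by omega
        calc a * (d.2 - d.1 - 1) + a * d.1 + a
            = a * ((d.2 - d.1 - 1) + d.1 + 1) := by ring
          _ = a * d.2 := by rw [h5]
      have hid2 : a * (d.2 - 1) + a = a * d.2 := by
        have h5 : (d.2 - 1) + 1 = d.2 := by omega
        calc a * (d.2 - 1) + a = a * ((d.2 - 1) + 1) := by ring
          _ = a * d.2 := by rw [h5]
      have hcomm : par a b d * b = b * par a b d := Nat.mul_comm _ _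
      linarith
  have hexp2 : b * S.sum (par a b)
      = b * (S.filter (fun e => e.2 ≤ d.2)).sum (par a b)
        + b * (S.filter (fun e => ¬ e.2 ≤ d.2)).sum (par a b) := by
    rw [← hsplit]; ring
  rw [hW]
  linarith

lemma rigid {a b : ℕ} (hab : a < b) (hcop : Nat.Coprime a b) (D : DyckPath a b)
    {d : ℕ × ℕ} (hd : Admissible a b d) {y : ℕ}
    (hL : IsLaserDiag a b D d.1 y d.2) :
    y + par a b d = D.h (d.2 - 1) := by
  obtain ⟨r, hr1, hr2, hkey⟩ := par_key hcop hd
  have hdiag : d.1 + 2 ≤ d.2 := hd.1.1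
  obtain ⟨hxk, hkb, hmain, hall⟩ := hL
  have hid : a * (d.2 - d.1) = a * (d.2 - d.1 - 1) + a := by
    have h5 : d.2 - d.1 = (d.2 - d.1 - 1) + 1 := by omega
    conv_lhs => rw [h5]
    ring
  have hcm : par a b d * b = b * par a b d := Nat.mul_comm _ _
  have hub : D.h (d.2 - 1) ≤ y + par a b d := by
    by_contra hcon
    push_neg at hcon
    have h6 : b * (y + par a b d + 1) ≤ b * D.h (d.2 - 1) := Nat.mul_le_mul le_rfl hcon
    have h7 : b * (y + par a b d + 1) = b * y + b * par a b d + b := by ring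
    linarith
  have hlb : y + par a b d ≤ D.h (d.2 - 1) := by
    have hu := hall (d.2 - 2) (by omega) (by omega)
    have h5 : d.2 - 2 + 1 - d.1 = d.2 - d.1 - 1 := by omega
    rw [h5] at hu
    have hm : D.h (d.2 - 2) ≤ D.h (d.2 - 1) := D.mono (by omega)
    have hm' : b * D.h (d.2 - 2) ≤ b * D.h (d.2 - 1) := Nat.mul_le_mul le_rfl hm
    by_contra hcon
    push_neg at hcon
    have h6 : b * (D.h (d.2 - 1) + 1) ≤ b * (y + par a b d) := Nat.mul_le_mul le_rfl hcon
    have h7 : b * (D.h (d.2 - 1) + 1) = b * D.h (d.2 - 1) + b := by ring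
    have h8 : b * (y + par a b d) = b * y + b * par a b d := by ring
    linarith
  omega

lemma compat_extract {a b : ℕ} (hab : a < b) (hcop : Nat.Coprime a b) (D : DyckPath a b)
    {dd ee : ℕ × ℕ} (hd : Admissible a b dd) (he : Admissible a b ee)
    (hdF : dd ∈ FD a b D) (heF : ee ∈ FD a b D) (heq : dd.2 = ee.2) (hlt : dd.1 < ee.1) :
    b * par a b ee + a * ee.1 + 1 ≤ b * par a b dd + a * dd.1 := by
  obtain ⟨y, hBN, hne0, hL⟩ := hdF
  obtain ⟨y', hBN', hne0', hL'⟩ := heF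
  have r1 := rigid hab hcop D hd hL
  have r2 := rigid hab hcop D he hL'
  rw [← heq] at r2
  have hddiag : dd.1 + 2 ≤ dd.2 := hd.1.1
  have hediag : ee.1 + 2 ≤ ee.2 := he.1.1
  have hu := hL.2.2.2 (ee.1 - 1) (by omega) (by omega)
  have h5 : ee.1 - 1 + 1 - dd.1 = ee.1 - dd.1 := by omega
  rw [h5] at hu
  have hBN'1 : D.h (ee.1 - 1) ≤ y' := by
    have h := hBN'.2.1
    rwa [if_neg (by omega : ¬ ee.1 = 0)] at h
  have hid : a * (ee.1 - dd.1) + a * dd.1 = a * ee.1 := by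
    have h6 : (ee.1 - dd.1) + dd.1 = ee.1 := by omega
    calc a * (ee.1 - dd.1) + a * dd.1 = a * ((ee.1 - dd.1) + dd.1) := by ring
      _ = a * ee.1 := by rw [h6]
  have hmul : b * D.h (ee.1 - 1) ≤ b * y' := Nat.mul_le_mul le_rfl hBN'1
  have e1 : b * y + b * par a b dd = b * D.h (dd.2 - 1) := by
    rw [← r1]; ring
  have e2 : b * y' + b * par a b ee = b * D.h (dd.2 - 1) := by
    rw [← r2]; ring
  linarith

end AuxObstruction

/-- A face `F` of `Âss(a,b)` is a face of `Ass(a,b)` if and only if no 2-element subset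
of `F` is an edge of the obstruction graph `OG(a,b)`. -/
theorem mem_Ass_iff_no_obstruction (a b : ℕ) (ha : 0 < a) (hab : a < b)
    (hcop : Nat.Coprime a b) (F : Finset (ℕ × ℕ)) (hF : F ∈ (hatAss a b).faces) :
    F ∈ (Ass a b).faces ↔ ∀ d ∈ F, ∀ d' ∈ F, ¬OGEdge a b d d' := by
  constructor
  · rintro ⟨D, hD⟩ d hd d' hd' hOG
    refine hOG.2.2 ⟨D, fun e he => ?_⟩
    rcases Finset.mem_insert.mp he with he1 | he1
    · exact he1 ▸ hD d hd
    · rw [Finset.mem_singleton] at he1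
      exact he1 ▸ hD d' hd'
  · intro hno
    obtain ⟨hadm, hnc⟩ := hF
    have hb : 0 < b := by omega
    have hcompat : ∀ dd ∈ F, ∀ ee ∈ F, dd.2 = ee.2 → dd.1 < ee.1 →
        b * par a b ee + a * ee.1 + 1 ≤ b * par a b dd + a * dd.1 := by
      intro dd hdd ee hee h2 h1
      have hne : dd ≠ ee := fun h => by rw [h] at h1; omega
      have hsub : ({dd, ee} : Finset (ℕ × ℕ)) ⊆ F := by
        intro e he
        rcases Finset.mem_insert.mp he with he1 | he1
        · exact he1 ▸ hdd
        · rw [Finset.mem_singleton] at he1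
          exact he1 ▸ hee
      have hpairhat := (hatAss a b).down F ⟨hadm, hnc⟩ _ hsub
      have hpair : ({dd, ee} : Finset (ℕ × ℕ)) ∈ (Ass a b).faces := by
        by_contra hnot
        exact hno dd hdd ee hee ⟨hne, hpairhat, hnot⟩
      obtain ⟨D, hD⟩ := hpair
      exact compat_extract hab hcop D (hadm dd hdd) (hadm ee hee)
        (hD dd (Finset.mem_insert_self _ _))
        (hD ee (Finset.mem_insert_of_mem (Finset.mem_singleton_self _))) h2 h1
    refine ⟨⟨fun u => if b ≤ u then a else a - Wt a b F (u + 1), ?_, ?_, ?_⟩, ?_⟩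
    · -- monotone
      intro x y hxy
      dsimp only
      by_cases hx : b ≤ x
      · rw [if_pos hx, if_pos (le_trans hx hxy)]
      · rw [if_neg hx]
        by_cases hy : b ≤ y
        · rw [if_pos hy]
          exact Nat.sub_le a _
        · rw [if_neg hy]
          exact Nat.sub_le_sub_left (Wt_anti (by omega)) a
    · -- norm
      intro x hx
      rw [if_pos hx]
    · -- above
      intro x hx
      rw [if_neg (by omega : ¬ b ≤ x)]
      have hg := Wt_glob hcop hadm (x + 1) (by omega)
      have hle := Wt_le_a hb hcop hadm (x + 1) (by omega)
      have hE : b * (a - Wt a b F (x + 1)) + b * Wt a b F (x + 1) = b * a := by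
        rw [← Nat.mul_add, Nat.sub_add_cancel hle]
      have hcomm : a * b = b * a := Nat.mul_comm a b
      linarith
    · -- membership
      intro d hd
      obtain ⟨r, hr1, hr2, hkey⟩ := par_key hcop (hadm d hd)
      obtain ⟨hd1, hd2, hd3⟩ := (hadm d hd).1
      have hjump := Wt_jump hadm hd
      have hstrict := Wt_strict hcop hadm hd
      set p := par a b d with hp
      set Wj := Wt a b F d.2 with hWj
      have hE : (a - (p + Wj)) + (p + Wj) = a := Nat.sub_add_cancel (by omega)
      refine ⟨a - (p + Wj), ⟨by omega, ?_, ?_⟩, ?_, ?_, hd2, ?_, ?_⟩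
      · -- lower bound of the north step
        by_cases hz : d.1 = 0
        · rw [if_pos hz]
          exact Nat.zero_le _
        · rw [if_neg hz]
          show (if b ≤ d.1 - 1 then a else a - Wt a b F (d.1 - 1 + 1)) ≤ a - (p + Wj)
          rw [if_neg (by omega : ¬ b ≤ d.1 - 1), (by omega : d.1 - 1 + 1 = d.1)]
          exact Nat.sub_le_sub_left hjump a
      · -- strict upper bound: y < h d.1
        show a - (p + Wj) < (if b ≤ d.1 then a else a - Wt a b F (d.1 + 1))
        rw [if_neg (by omega : ¬ b ≤ d.1)]
        have hk := Wt_key hcop hadm hnc hcompat hd (le_refl d.1) hd1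
        have hexp : a * (d.1 + 1) = a * d.1 + a := by ring
        have hlt : Wt a b F (d.1 + 1) < p + Wj := by
          have h6 : b * Wt a b F (d.1 + 1) < b * (p + Wj) := by
            have h7 : b * (p + Wj) = b * p + b * Wj := by ring
            linarith
          exact Nat.lt_of_mul_lt_mul_left h6
        omega
      · -- (d.1, y) ≠ (0, 0)
        simp only [ne_eq, Prod.mk.injEq, not_and]
        intro _
        omega
      · -- d.1 < d.2
        omega
      · -- main laser inequality
        show b * (if b ≤ d.2 - 1 then a else a - Wt a b F (d.2 - 1 + 1))
            < b * (a - (p + Wj)) + a * (d.2 - d.1)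
        rw [if_neg (by omega : ¬ b ≤ d.2 - 1), (by omega : d.2 - 1 + 1 = d.2), ← hWj]
        have hWja : Wj ≤ a := by omega
        have hEW : b * (a - Wj) + b * Wj = b * a := by
          rw [← Nat.mul_add, Nat.sub_add_cancel hWja]
        have hEy : b * (a - (p + Wj)) + b * (p + Wj) = b * a := by
          rw [← Nat.mul_add, hE]
        have hEy2 : b * (p + Wj) = b * p + b * Wj := by ring
        have hid : a * (d.2 - d.1) = a * (d.2 - d.1 - 1) + a := by
          have h5 : d.2 - d.1 = (d.2 - d.1 - 1) + 1 := by omega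
          conv_lhs => rw [h5]
          ring
        have hcm : p * b = b * p := Nat.mul_comm _ _
        linarith
      · -- laser stays strictly above the path
        intro u hu1 hu2
        show b * (a - (p + Wj)) + a * (u + 1 - d.1)
            < b * (if b ≤ u then a else a - Wt a b F (u + 1))
        rw [if_neg (by omega : ¬ b ≤ u)]
        have hk := Wt_key hcop hadm hnc hcompat hd hu1 (by omega)
        have hidu : a * (u + 1 - d.1) + a * d.1 = a * (u + 1) := by
          have h6 : (u + 1 - d.1) + d.1 = u + 1 := by omega
          calc a * (u + 1 - d.1) + a * d.1 = a * ((u + 1 - d.1) + d.1) := by ring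
            _ = a * (u + 1) := by rw [h6]
        have hWua : Wt a b F (u + 1) ≤ a := Wt_le_a hb hcop hadm (u + 1) (by omega)
        have hEWu : b * (a - Wt a b F (u + 1)) + b * Wt a b F (u + 1) = b * a := by
          rw [← Nat.mul_add, Nat.sub_add_cancel hWua]
        have hEy : b * (a - (p + Wj)) + b * (p + Wj) = b * a := by
          rw [← Nat.mul_add, hE]
        have hEy2 : b * (p + Wj) = b * p + b * Wj := by ring
        linarith
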